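/- (Upper bound on the size of the Levenshtein ball.) Let Γ be a finite type with more than one element, let S be a nonempty list over Γ, and let k ≥ 1. Then the cardinality of 𝒮_k(S,Γ) = {S' : List Γ | d_lev(S, S') ≤ k} satisfies |𝒮_k(S,Γ)| ≤ (|Γ| + 1)^k · (2·(|S| + k) − 1)^k, where the second factor is the product ∏_{j=1}^{k} (2·(|S| + k) − 1). -/

import Mathlib

/-- Cost structure for edit distance (removed from Mathlib; restated with its old meaning). -/
structure Levenshtein.Cost (α β δ : Type*) where
  delete : α → δ
  insert : β → δ
  substitute : α → β → δ

/-- The unit cost function (as formerly in Mathlib). -/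
def Levenshtein.defaultCost {α : Type*} [DecidableEq α] : Levenshtein.Cost α α ℕ where
  delete _ := 1
  insert _ := 1
  substitute a b := if a = b then 0 else 1

/-- Levenshtein distance, by the recursion Mathlib formerly proved for its `levenshtein`. -/
def levenshtein {α β : Type*} (C : Levenshtein.Cost α β ℕ) : List α → List β → ℕ
  | [], ys => (ys.map C.insert).sum
  | xs, [] => (xs.map C.delete).sum
  | x :: xs, y :: ys =>
    min (C.delete x + levenshtein C xs (y :: ys))
      (min (C.insert y + levenshtein C (x :: xs) ys) (C.substitute x y + levenshtein C xs ys))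

/-- The Levenshtein (edit) distance with unit costs. -/
def dlev {Γ : Type*} [DecidableEq Γ] (S S' : List Γ) : ℕ :=
  levenshtein Levenshtein.defaultCost S S'

@[simp] theorem levenshtein_nil_nil' {α β : Type*} (C : Levenshtein.Cost α β ℕ) :
    levenshtein C [] [] = 0 := by simp [levenshtein]

@[simp] theorem levenshtein_nil_cons' {α β : Type*} (C : Levenshtein.Cost α β ℕ) (b : β) (ys : List β) :
    levenshtein C [] (b :: ys) = C.insert b + levenshtein C [] ys := by simp [levenshtein]

@[simp] theorem levenshtein_cons_nil' {α β : Type*} (C : Levenshtein.Cost α β ℕ) (a : α) (xs : List α) :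
    levenshtein C (a :: xs) [] = C.delete a + levenshtein C xs [] := by
  cases xs <;> simp [levenshtein]

@[simp] theorem levenshtein_cons_cons' {α β : Type*} (C : Levenshtein.Cost α β ℕ) (x : α) (xs : List α)
    (y : β) (ys : List β) :
    levenshtein C (x :: xs) (y :: ys) =
      min (C.delete x + levenshtein C xs (y :: ys))
        (min (C.insert y + levenshtein C (x :: xs) ys) (C.substitute x y + levenshtein C xs ys)) := by
  rw [levenshtein]

@[simp] theorem defaultCost_delete' {α : Type*} [DecidableEq α] (a : α) :
    (Levenshtein.defaultCost : Levenshtein.Cost α α ℕ).delete a = 1 := rfl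

@[simp] theorem defaultCost_insert' {α : Type*} [DecidableEq α] (a : α) :
    (Levenshtein.defaultCost : Levenshtein.Cost α α ℕ).insert a = 1 := rfl

@[simp] theorem defaultCost_substitute' {α : Type*} [DecidableEq α] (a b : α) :
    (Levenshtein.defaultCost : Levenshtein.Cost α α ℕ).substitute a b = if a = b then 0 else 1 := rfl

namespace LevBallAux

variable {Γ : Type*} [DecidableEq Γ] [Fintype Γ]

/-- Apply an encoded single edit operation (or a no-op) to a list. -/
def apply1 (T : List Γ) (p : ℕ × Option Γ) : List Γ :=
  match p.2 with
  | none => if p.1 < T.length then T.eraseIdx p.1 else T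
  | some a => if p.1 ≤ T.length then T.insertIdx p.1 a else T.set (p.1 - T.length - 1) a

/-- All lists obtainable from `T` by at most one edit operation. -/
def onestep (T : List Γ) : Finset (List Γ) :=
  (Finset.range (2 * T.length + 1) ×ˢ (Finset.univ : Finset (Option Γ))).image (apply1 T)

/-- The combinatorial ball: lists obtainable from `S` by at most `n` edits. -/
def ball (S : List Γ) : ℕ → Finset (List Γ)
  | 0 => {S}
  | n + 1 => (ball S n).biUnion onestep

theorem mem_onestep_iff {T T' : List Γ} :
    T' ∈ onestep T ↔ ∃ j < 2 * T.length + 1, ∃ a : Option Γ, apply1 T (j, a) = T' := by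
  simp only [onestep, Finset.mem_image, Finset.mem_product, Finset.mem_range,
    Finset.mem_univ, and_true, Prod.exists]
  constructor
  · rintro ⟨j, a, hj, h⟩
    exact ⟨j, hj, a, h⟩
  · rintro ⟨j, hj, a, h⟩
    exact ⟨j, a, hj, h⟩

theorem self_mem_onestep (T : List Γ) : T ∈ onestep T := by
  rw [mem_onestep_iff]
  refine ⟨2 * T.length, by omega, none, ?_⟩
  simp [apply1]
  omega

theorem delete_front_mem_onestep (x : Γ) (T : List Γ) : T ∈ onestep (x :: T) := by
  rw [mem_onestep_iff]
  exact ⟨0, by simp, none, by simp [apply1]⟩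

theorem insert_front_mem_onestep (y : Γ) (T : List Γ) : (y :: T) ∈ onestep T := by
  rw [mem_onestep_iff]
  exact ⟨0, by omega, some y, by simp [apply1]⟩

theorem subst_front_mem_onestep (x y : Γ) (T : List Γ) : (y :: T) ∈ onestep (x :: T) := by
  rw [mem_onestep_iff]
  refine ⟨T.length + 2, by simp only [List.length_cons]; omega, some y, ?_⟩
  have h1 : ¬ (T.length + 2 ≤ (x :: T).length) := by simp only [List.length_cons]; omega
  simp only [apply1, if_neg h1]
  have h2 : T.length + 2 - (x :: T).length - 1 = 0 := by simp only [List.length_cons]; omega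
  rw [h2]
  simp

theorem cons_mem_onestep {T T' : List Γ} (x : Γ) (h : T' ∈ onestep T) :
    (x :: T') ∈ onestep (x :: T) := by
  rw [mem_onestep_iff] at h ⊢
  obtain ⟨j, hj, a, ha⟩ := h
  match a with
  | none =>
    by_cases hlt : j < T.length
    · refine ⟨j + 1, by simp; omega, none, ?_⟩
      simp only [apply1] at ha ⊢
      rw [if_pos hlt] at ha
      rw [if_pos (by simp; omega)]
      simp [List.eraseIdx_cons_succ, ha]
    · simp only [apply1, if_neg hlt] at ha
      subst ha
      refine ⟨2 * (x :: T).length, by omega, none, ?_⟩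
      simp only [apply1]
      rw [if_neg (by omega)]
  | some a =>
    by_cases hle : j ≤ T.length
    · refine ⟨j + 1, by simp; omega, some a, ?_⟩
      simp only [apply1] at ha ⊢
      rw [if_pos hle] at ha
      rw [if_pos (by simp; omega)]
      simp [List.insertIdx_succ_cons, ha]
    · refine ⟨j + 2, by simp at hj ⊢; omega, some a, ?_⟩
      simp only [apply1] at ha ⊢
      rw [if_neg hle] at ha
      rw [if_neg (by simp; omega)]
      have h2 : j + 2 - (x :: T).length - 1 = (j - T.length - 1) + 1 := by simp; omega
      rw [h2]
      simp [ha]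

theorem mem_ball_succ_of {S T T' : List Γ} {n : ℕ} (h : T ∈ ball S n)
    (h' : T' ∈ onestep T) : T' ∈ ball S (n + 1) := by
  rw [ball, Finset.mem_biUnion]
  exact ⟨T, h, h'⟩

theorem ball_mono {S : List Γ} : ∀ {m n : ℕ}, m ≤ n → ball S m ⊆ ball S n := by
  intro m n h
  induction n with
  | zero => simp_all
  | succ n ih =>
    rcases Nat.lt_or_ge m (n + 1) with h' | h'
    · intro T hT
      exact mem_ball_succ_of (ih (by omega) hT) (self_mem_onestep T)
    · have : m = n + 1 := by omega
      subst this
      exact fun _ h => h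

theorem ball_compose {S T S' : List Γ} {m n : ℕ} (h : T ∈ ball S m) :
    S' ∈ ball T n → S' ∈ ball S (m + n) := by
  induction n generalizing S' with
  | zero => intro h'; simp [ball] at h'; subst h'; exact h
  | succ n ih =>
    intro h'
    rw [ball, Finset.mem_biUnion] at h'
    obtain ⟨T'', h1, h2⟩ := h'
    exact mem_ball_succ_of (ih h1) h2

theorem ball_cons {T S' : List Γ} (x : Γ) {n : ℕ} (h : S' ∈ ball T n) :
    (x :: S') ∈ ball (x :: T) n := by
  induction n generalizing S' with
  | zero => simp [ball] at h ⊢; subst h; rfl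
  | succ n ih =>
    rw [ball, Finset.mem_biUnion] at h
    obtain ⟨T'', h1, h2⟩ := h
    exact mem_ball_succ_of (ih h1) (cons_mem_onestep x h2)

/-- Key structural lemma: every word within edit distance is in the combinatorial ball. -/
theorem mem_ball_dlev : ∀ (S' S : List Γ), S' ∈ ball S (dlev S S') := by
  intro S'
  induction S' with
  | nil =>
    intro S
    induction S with
    | nil => simp [dlev, ball]
    | cons x xs ih =>
      have h1 : xs ∈ ball (x :: xs) 1 := by
        rw [ball, Finset.mem_biUnion]
        exact ⟨x :: xs, by simp [ball], delete_front_mem_onestep x xs⟩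
      have := ball_compose h1 ih
      have hd : dlev (x :: xs) [] = 1 + dlev xs [] := by simp [dlev]
      rw [hd]
      exact this
  | cons y ys ihy =>
    intro S
    induction S with
    | nil =>
      have hd : dlev [] (y :: ys) = dlev [] ys + 1 := by
        simp [dlev]; omega
      rw [hd]
      exact mem_ball_succ_of (ihy []) (insert_front_mem_onestep y ys)
    | cons x xs ihx =>
      have hd : dlev (x :: xs) (y :: ys) =
          min (1 + dlev xs (y :: ys))
            (min (1 + dlev (x :: xs) ys)
              ((if x = y then 0 else 1) + dlev xs ys)) := by
        simp [dlev]
      rw [hd]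
      rcases min_cases (1 + dlev xs (y :: ys))
        (min (1 + dlev (x :: xs) ys) ((if x = y then 0 else 1) + dlev xs ys)) with
        ⟨h, _⟩ | ⟨h, _⟩
      · rw [h]
        have h1 : xs ∈ ball (x :: xs) 1 := by
          rw [ball, Finset.mem_biUnion]
          exact ⟨x :: xs, by simp [ball], delete_front_mem_onestep x xs⟩
        exact ball_compose h1 ihx
      · rw [h]
        rcases min_cases (1 + dlev (x :: xs) ys) ((if x = y then 0 else 1) + dlev xs ys) with
          ⟨h2, _⟩ | ⟨h2, _⟩
        · rw [h2, Nat.add_comm]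
          exact mem_ball_succ_of (ihy (x :: xs)) (insert_front_mem_onestep y ys)
        · rw [h2]
          by_cases hxy : x = y
          · subst hxy
            rw [if_pos rfl, Nat.zero_add]
            exact ball_cons x (ihy xs)
          · rw [if_neg hxy, Nat.add_comm]
            exact mem_ball_succ_of (ball_cons x (ihy xs)) (subst_front_mem_onestep x y ys)

theorem card_onestep_le (T : List Γ) :
    (onestep T).card ≤ (2 * T.length + 1) * (Fintype.card Γ + 1) := by
  calc (onestep T).card ≤
      ((Finset.range (2 * T.length + 1)) ×ˢ (Finset.univ : Finset (Option Γ))).card :=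
        Finset.card_image_le
    _ = (2 * T.length + 1) * (Fintype.card Γ + 1) := by
        simp [Finset.card_product, Fintype.card_option]

theorem length_le_of_mem_onestep {T T' : List Γ} (h : T' ∈ onestep T) :
    T'.length ≤ T.length + 1 := by
  rw [mem_onestep_iff] at h
  obtain ⟨j, _, a, ha⟩ := h
  match a with
  | none =>
    simp only [apply1] at ha
    split at ha <;> subst ha
    · have := T.length_eraseIdx_le j
      omega
    · omega
  | some a =>
    simp only [apply1] at ha
    split at ha <;> subst ha
    · have : (T.insertIdx j a).length ≤ T.length + 1 := List.length_insertIdx_le_succ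
      omega
    · simp

theorem length_le_of_mem_ball {S T : List Γ} {n : ℕ} (h : T ∈ ball S n) :
    T.length ≤ S.length + n := by
  induction n generalizing T with
  | zero => simp [ball] at h; subst h; simp
  | succ n ih =>
    rw [ball, Finset.mem_biUnion] at h
    obtain ⟨T'', h1, h2⟩ := h
    have := ih h1
    have := length_le_of_mem_onestep h2
    omega

theorem card_ball_le (S : List Γ) (n : ℕ) :
    (ball S n).card ≤ ((Fintype.card Γ + 1) * (2 * (S.length + n) - 1)) ^ n := by
  induction n with
  | zero => simp [ball]
  | succ n ih =>
    rw [ball]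
    calc ((ball S n).biUnion onestep).card
        ≤ ∑ T ∈ ball S n, (onestep T).card := Finset.card_biUnion_le
      _ ≤ ∑ _T ∈ ball S n, (2 * (S.length + n) + 1) * (Fintype.card Γ + 1) := by
          apply Finset.sum_le_sum
          intro T hT
          have h1 := card_onestep_le T
          have h2 := length_le_of_mem_ball hT
          calc (onestep T).card ≤ (2 * T.length + 1) * (Fintype.card Γ + 1) := h1
            _ ≤ (2 * (S.length + n) + 1) * (Fintype.card Γ + 1) := by
                apply Nat.mul_le_mul_right; omega
      _ = (ball S n).card * ((2 * (S.length + n) + 1) * (Fintype.card Γ + 1)) := by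
          rw [Finset.sum_const, smul_eq_mul]
      _ ≤ ((Fintype.card Γ + 1) * (2 * (S.length + n) - 1)) ^ n *
            ((2 * (S.length + n) + 1) * (Fintype.card Γ + 1)) :=
          Nat.mul_le_mul_right _ ih
      _ ≤ ((Fintype.card Γ + 1) * (2 * (S.length + (n + 1)) - 1)) ^ (n + 1) := by
          rw [pow_succ]
          apply Nat.mul_le_mul
          · apply Nat.pow_le_pow_left
            apply Nat.mul_le_mul_left
            omega
          · rw [Nat.mul_comm]
            apply Nat.mul_le_mul_left
            omega

end LevBallAux

/-- Upper bound on the size of the Levenshtein ball of radius `k`. -/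
theorem ncard_ball_le {Γ : Type*} [DecidableEq Γ] [Fintype Γ]
    (hΓ : 1 < Fintype.card Γ) (S : List Γ) (hS : S ≠ []) (k : ℕ) (hk : 1 ≤ k) :
    Set.ncard {S' : List Γ | dlev S S' ≤ k} ≤
      (Fintype.card Γ + 1) ^ k * (2 * (S.length + k) - 1) ^ k := by
  have hsub : {S' : List Γ | dlev S S' ≤ k} ⊆ ↑(LevBallAux.ball S k) := by
    intro S' hS'
    simp only [Set.mem_setOf_eq] at hS'
    exact LevBallAux.ball_mono hS' (LevBallAux.mem_ball_dlev S' S)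
  calc Set.ncard {S' : List Γ | dlev S S' ≤ k}
      ≤ Set.ncard ↑(LevBallAux.ball S k) :=
        Set.ncard_le_ncard hsub (LevBallAux.ball S k).finite_toSet
    _ = (LevBallAux.ball S k).card := Set.ncard_coe_finset _
    _ ≤ ((Fintype.card Γ + 1) * (2 * (S.length + k) - 1)) ^ k := LevBallAux.card_ball_le S k
    _ = (Fintype.card Γ + 1) ^ k * (2 * (S.length + k) - 1) ^ k := mul_pow _ _ _
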